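/- Let q = 4k+1 be a prime power with k odd. In the group Z_2 × F_q, define S_1 = {(0,0),(1,0)}, S_2 = {0}×D^4_0 ∪ {1}×D^4_2, S_3 = {0}×D^4_1 ∪ {0}×D^4_3. Then {S_1,S_2,S_3} is an optimal (2q, 3, (2,2k,2k), 4k+2, 2k+1)-BSWEDF: every nonzero element of Z_2 × F_q appears at most 2k+1 times in ⋃_{i≠j} D(S_i, S̃_j), some element attains 2k+1, and 2k+1 = ⌈k̃·a·(m−1)/(n−1)⌉ with k̃ = 2k, a = 4k+2, m = 3, n = 2q. -/

import Mathlib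

set_option linter.unusedSectionVars false
set_option maxHeartbeats 1000000
/-- The multiset of external differences `{x - y : x ∈ X, y ∈ Y}` (with multiplicity). -/
def extDiff {G : Type*} [Sub G] (X Y : Multiset G) : Multiset G :=
  X.bind fun x => Y.map fun y => x - y

/-- The multiset `⋃_{i ≠ j} D(B_i, B̃_j)`, where the standard weighted multiset `B̃_j`
repeats each element of `B_j` exactly `ktil / |B_j|` times. -/
def wtotal {G : Type*} [Sub G] {m : ℕ} (B : Fin m → Finset G) (ktil : ℕ) : Multiset G :=
  ∑ i : Fin m, ∑ j : Fin m,
    if i ≠ j then extDiff (B i).val ((ktil / (B j).card) • (B j).val) else 0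

/-- The cyclotomic class of index 4: `D^4_i = {α^{i+4j} : 0 ≤ j ≤ k-1}`. -/
def cyc4 {F : Type*} [Field F] [DecidableEq F] (α : Fˣ) (k i : ℕ) : Finset F :=
  (Finset.range k).image fun j => (α : F) ^ (i + 4 * j)

section CountLemmas
variable {G : Type*} [AddCommGroup G] [DecidableEq G]

lemma count_extDiff (X : Finset G) (M : Multiset G) (δ : G) :
    (extDiff X.val M).count δ = ∑ x ∈ X, M.count (x - δ) := by
  show (Multiset.bind _ _).count δ = _
  rw [Multiset.count_bind, Finset.sum]
  congr 1
  refine Multiset.map_congr rfl fun x _ => ?_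
  conv_lhs => rw [show δ = x - (x - δ) from (sub_sub_cancel x δ).symm]
  exact Multiset.count_map_eq_count' _ _ sub_right_injective _

lemma count_extDiff_nsmul (X Y : Finset G) (n : ℕ) (δ : G) :
    (extDiff X.val (n • Y.val)).count δ
      = n * (X.filter (fun x => x - δ ∈ Y)).card := by
  rw [count_extDiff, Finset.card_filter, Finset.mul_sum]
  refine Finset.sum_congr rfl fun x _ => ?_
  rw [Multiset.count_nsmul]
  by_cases h : x - δ ∈ Y
  · rw [if_pos h, Multiset.count_eq_one_of_mem Y.nodup h]
  · rw [if_neg h, Multiset.count_eq_zero_of_notMem h, mul_zero]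

lemma card_filter_mem_union (X T T' : Finset G) (h : Disjoint T T') (f : G → G) :
    (X.filter (fun x => f x ∈ T ∪ T')).card
      = (X.filter (fun x => f x ∈ T)).card + (X.filter (fun x => f x ∈ T')).card := by
  rw [← Finset.card_union_of_disjoint, ← Finset.filter_or]
  · simp only [Finset.mem_union]
  · rw [Finset.disjoint_filter]
    exact fun x _ hT hT' => (Finset.disjoint_left.mp h) hT hT'

lemma card_filter_union_src (X X' : Finset G) (p : G → Prop) [DecidablePred p]
    (h : Disjoint X X') :
    ((X ∪ X').filter p).card = (X.filter p).card + (X'.filter p).card := by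
  rw [Finset.filter_union, Finset.card_union_of_disjoint (Finset.disjoint_filter_filter h)]

end CountLemmas

section Pr
variable {F : Type*} [DecidableEq F]

def pr (e : ZMod 2) (A : Finset F) : Finset (ZMod 2 × F) := A.image fun x => (e, x)

lemma mem_pr {e : ZMod 2} {A : Finset F} {y : ZMod 2 × F} :
    y ∈ pr e A ↔ y.1 = e ∧ y.2 ∈ A := by
  obtain ⟨y1, y2⟩ := y
  simp only [pr, Finset.mem_image, Prod.mk.injEq]
  constructor
  · rintro ⟨a, ha, rfl, rfl⟩; exact ⟨rfl, ha⟩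
  · rintro ⟨rfl, ha⟩; exact ⟨y2, ha, rfl, rfl⟩

lemma card_pr (e : ZMod 2) (A : Finset F) : (pr e A).card = A.card :=
  Finset.card_image_of_injective _ (fun a b h => by simpa using h)

lemma pr_disjoint {e e' : ZMod 2} (h : e ≠ e') (A B : Finset F) :
    Disjoint (pr e A) (pr e' B) := by
  rw [Finset.disjoint_left]
  intro y hy hy'
  rw [mem_pr] at hy hy'
  exact h (hy.1 ▸ hy'.1 ▸ rfl)

variable [AddGroup F]

lemma filter_pr_card (e c : ZMod 2) (A B : Finset F) (δ : ZMod 2 × F) :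
    ((pr e A).filter (fun x => x - δ ∈ pr c B)).card
      = if e - δ.1 = c then (A.filter (fun a => a - δ.2 ∈ B)).card else 0 := by
  split_ifs with h
  · rw [show (pr e A).filter (fun x => x - δ ∈ pr c B)
        = pr e (A.filter (fun a => a - δ.2 ∈ B)) from ?_, card_pr]
    ext y
    simp only [Finset.mem_filter, mem_pr, Prod.fst_sub, Prod.snd_sub]
    constructor
    · rintro ⟨⟨h1, h2⟩, _, h4⟩; exact ⟨h1, h2, h4⟩
    · rintro ⟨h1, h2, h4⟩; exact ⟨⟨h1, h2⟩, by rw [h1]; exact h, h4⟩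
  · rw [Finset.card_eq_zero, Finset.filter_eq_empty_iff]
    intro y hy hmem
    rw [mem_pr] at hy hmem
    exact h (by rw [← hy.1]; exact hmem.1)

end Pr

section Cyc
variable {F : Type*} [Field F] [Fintype F] [DecidableEq F] {k : ℕ} {α : Fˣ}

lemma mem_cyc4_pow (hα : orderOf α = 4 * k) (hk : 1 ≤ k) {i : ℕ} (hi : i < 4) (n : ℕ) :
    (α : F) ^ n ∈ cyc4 α k i ↔ n % 4 = i := by
  have hcoe : ∀ m : ℕ, (α : F) ^ m = ((α ^ m : Fˣ) : F) := fun m => (Units.val_pow_eq_pow_val α m).symm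
  have hmem : (α : F) ^ n ∈ cyc4 α k i ↔ ∃ j < k, α ^ (i + 4 * j) = α ^ n := by
    simp only [cyc4, Finset.mem_image, Finset.mem_range]
    constructor
    · rintro ⟨j, hj, he⟩
      exact ⟨j, hj, Units.ext (by rw [Units.val_pow_eq_pow_val, Units.val_pow_eq_pow_val]; exact he)⟩
    · rintro ⟨j, hj, he⟩
      exact ⟨j, hj, by rw [hcoe, hcoe, he]⟩
  rw [hmem]
  constructor
  · rintro ⟨j, hj, he⟩
    rw [pow_eq_pow_iff_modEq, hα] at he
    have h4 : i + 4 * j ≡ n [MOD 4] := he.of_dvd ⟨k, rfl⟩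
    unfold Nat.ModEq at h4
    omega
  · intro hn
    refine ⟨(n % (4 * k)) / 4, ?_, ?_⟩
    · have := Nat.mod_lt n (show 0 < 4 * k by omega)
      omega
    · rw [pow_eq_pow_iff_modEq, hα]
      have h1 : n % (4 * k) ≡ n [MOD 4 * k] := Nat.mod_modEq n (4 * k)
      have h2 : (n % (4 * k)) % 4 = n % 4 := Nat.mod_mod_of_dvd n ⟨k, rfl⟩
      have h3 : i + 4 * (n % (4 * k) / 4) = n % (4 * k) := by omega
      rw [h3]; exact h1

lemma cyc4_ne_zero {i : ℕ} {x : F} (hx : x ∈ cyc4 α k i) : x ≠ 0 := by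
  simp only [cyc4, Finset.mem_image] at hx
  obtain ⟨j, _, rfl⟩ := hx
  rw [← Units.val_pow_eq_pow_val]
  exact Units.ne_zero _

lemma card_cyc4 (hα : orderOf α = 4 * k) (hk : 1 ≤ k) {i : ℕ} (hi : i < 4) :
    (cyc4 α k i).card = k := by
  rw [cyc4, Finset.card_image_of_injOn, Finset.card_range]
  intro a ha b hb he
  simp only [Finset.coe_range, Set.mem_Iio] at ha hb
  have he' : α ^ (i + 4 * a) = α ^ (i + 4 * b) :=
    Units.ext (by rw [Units.val_pow_eq_pow_val, Units.val_pow_eq_pow_val]; exact he)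
  rw [pow_eq_pow_iff_modEq, hα, Nat.ModEq, Nat.mod_eq_of_lt (by omega), Nat.mod_eq_of_lt (by omega)] at he'
  omega

lemma exists_pow_eq (hcard : Fintype.card F = 4 * k + 1) (hα : orderOf α = 4 * k)
    {x : F} (hx : x ≠ 0) : ∃ n : ℕ, x = (α : F) ^ n := by
  have hcu : Nat.card Fˣ = 4 * k := by
    rw [Nat.card_eq_fintype_card, Fintype.card_units, hcard]; omega
  have htop : Subgroup.zpowers α = ⊤ := by
    apply Subgroup.eq_top_of_card_eq
    rw [Nat.card_zpowers, hα, hcu]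
  have hu : Units.mk0 x hx ∈ Subgroup.zpowers α := htop ▸ Subgroup.mem_top _
  rw [← (isOfFinOrder_of_finite α).mem_powers_iff_mem_zpowers, Submonoid.mem_powers_iff] at hu
  obtain ⟨n, hn⟩ := hu
  exact ⟨n, by rw [← Units.val_pow_eq_pow_val, hn, Units.val_mk0]⟩

lemma chi_alpha (hcard : Fintype.card F = 4 * k + 1) (hα : orderOf α = 4 * k) (hk : 1 ≤ k) :
    quadraticChar F (α : F) = -1 := by
  rw [quadraticChar_neg_one_iff_not_isSquare]
  rintro ⟨c, hc⟩
  have hc0 : c ≠ 0 := by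
    rintro rfl
    rw [mul_zero] at hc
    exact Units.ne_zero α hc
  have hu : α = Units.mk0 c hc0 * Units.mk0 c hc0 := Units.ext (by simpa using hc)
  have hcu : Fintype.card Fˣ = 4 * k := by rw [Fintype.card_units, hcard]; omega
  have h1 : α ^ (2 * k) = 1 := by
    rw [hu, ← sq, ← pow_mul, show 2 * (2 * k) = Fintype.card Fˣ by rw [hcu]; ring]
    exact pow_card_eq_one
  have := orderOf_dvd_of_pow_eq_one h1
  rw [hα] at this
  have := Nat.le_of_dvd (by omega) this
  omega

lemma alpha_pow_2k (hcard : Fintype.card F = 4 * k + 1) (hα : orderOf α = 4 * k) (hk : 1 ≤ k) :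
    (α : F) ^ (2 * k) = -1 := by
  have hsq : ((α : F) ^ (2 * k)) * ((α : F) ^ (2 * k)) = 1 := by
    rw [← pow_add, ← Units.val_pow_eq_pow_val, show 2 * k + 2 * k = 4 * k by ring, ← hα,
      pow_orderOf_eq_one, Units.val_one]
  rcases mul_self_eq_one_iff.mp hsq with h | h
  · exfalso
    have h' : α ^ (2 * k) = 1 := Units.ext (by rw [Units.val_pow_eq_pow_val]; simpa using h)
    have := orderOf_dvd_of_pow_eq_one h'
    rw [hα] at this
    have := Nat.le_of_dvd (by omega) this
    omega
  · exact h

end Cyc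

section Chi
variable {F : Type*} [Field F] [Fintype F] [DecidableEq F] {k : ℕ} {α : Fˣ}


variable (hcard : Fintype.card F = 4 * k + 1) (hα : orderOf α = 4 * k) (hk : 1 ≤ k)
  (hodd : k % 2 = 1)
include hcard hα hk

lemma chi_pow (n : ℕ) : quadraticChar F ((α : F) ^ n) = (-1) ^ n := by
  rw [map_pow, chi_alpha hcard hα hk]

lemma mem_Q_iff {x : F} :
    x ∈ cyc4 α k 0 ∪ cyc4 α k 2 ↔ quadraticChar F x = 1 := by
  constructor
  · intro hx
    rw [Finset.mem_union] at hx
    rcases hx with hx | hx <;>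
    · simp only [cyc4, Finset.mem_image, Finset.mem_range] at hx
      obtain ⟨j, _, rfl⟩ := hx
      rw [chi_pow hcard hα hk]
      exact Even.neg_one_pow (Nat.even_iff.mpr (by omega))
  · intro hx
    have hx0 : x ≠ 0 := by
      rintro rfl; rw [quadraticChar_zero] at hx; norm_num at hx
    obtain ⟨n, rfl⟩ := exists_pow_eq hcard hα hx0
    rw [chi_pow hcard hα hk] at hx
    have hev : Even n := (neg_one_pow_eq_one_iff_even (by norm_num : (-1 : ℤ) ≠ 1)).mp hx
    rw [Finset.mem_union, mem_cyc4_pow hα hk (by norm_num), mem_cyc4_pow hα hk (by norm_num)]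
    obtain ⟨m, rfl⟩ := hev
    omega

lemma mem_N_iff {x : F} :
    x ∈ cyc4 α k 1 ∪ cyc4 α k 3 ↔ quadraticChar F x = -1 := by
  constructor
  · intro hx
    rw [Finset.mem_union] at hx
    rcases hx with hx | hx <;>
    · simp only [cyc4, Finset.mem_image, Finset.mem_range] at hx
      obtain ⟨j, _, rfl⟩ := hx
      rw [chi_pow hcard hα hk]
      exact Odd.neg_one_pow (Nat.odd_iff.mpr (by omega))
  · intro hx
    have hx0 : x ≠ 0 := by
      rintro rfl; rw [quadraticChar_zero] at hx; norm_num at hx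
    obtain ⟨n, rfl⟩ := exists_pow_eq hcard hα hx0
    rw [chi_pow hcard hα hk] at hx
    have hnev : ¬ Even n := by
      intro h
      rw [Even.neg_one_pow h] at hx; norm_num at hx
    rw [Nat.not_even_iff] at hnev
    rw [Finset.mem_union, mem_cyc4_pow hα hk (by norm_num), mem_cyc4_pow hα hk (by norm_num)]
    omega

include hodd in
lemma neg_mem_cyc4 {i : ℕ} (hi : i < 4) {x : F} (hx : x ∈ cyc4 α k i) :
    -x ∈ cyc4 α k ((i + 2) % 4) := by
  simp only [cyc4, Finset.mem_image, Finset.mem_range] at hx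
  obtain ⟨j, _, rfl⟩ := hx
  have : -((α : F) ^ (i + 4 * j)) = (α : F) ^ (2 * k + (i + 4 * j)) := by
    conv_rhs => rw [pow_add]
    rw [alpha_pow_2k hcard hα hk, neg_one_mul]
  rw [this, mem_cyc4_pow hα hk (by omega)]
  omega

omit hα hk in
lemma key_sum (d : F) (hd : d ≠ 0) :
    ∑ a : F, quadraticChar F a * quadraticChar F (a - d) = -1 := by
  have hchar2 : ringChar F ≠ 2 := by
    intro h
    have := FiniteField.even_card_iff_char_two.mp h
    rw [hcard] at this; omega
  have step1 : ∑ a : F, quadraticChar F a * quadraticChar F (a - d)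
      = ∑ a ∈ Finset.univ.erase (0 : F), quadraticChar F a * quadraticChar F (a - d) := by
    rw [← Finset.add_sum_erase Finset.univ _ (Finset.mem_univ (0 : F)),
      quadraticChar_zero, zero_mul, zero_add]
  rw [step1]
  have step2 : ∑ a ∈ Finset.univ.erase (0 : F), quadraticChar F a * quadraticChar F (a - d)
      = ∑ a ∈ Finset.univ.erase (0 : F), quadraticChar F (1 - d * a⁻¹) := by
    refine Finset.sum_congr rfl fun a ha => ?_
    have ha0 : a ≠ 0 := (Finset.mem_erase.mp ha).1
    rw [← map_mul]
    have : a * (a - d) = a ^ 2 * (1 - d * a⁻¹) := by field_simp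
    rw [this, map_mul, quadraticChar_sq_one' ha0, one_mul]
  rw [step2]
  have step3 : ∑ a ∈ Finset.univ.erase (0 : F), quadraticChar F (1 - d * a⁻¹)
      = ∑ z ∈ Finset.univ.erase (1 : F), quadraticChar F z := by
    refine Finset.sum_nbij' (fun a => 1 - d * a⁻¹) (fun z => d * (1 - z)⁻¹) ?_ ?_ ?_ ?_ ?_
    · intro a ha
      have ha0 : a ≠ 0 := (Finset.mem_erase.mp ha).1
      refine Finset.mem_erase.mpr ⟨?_, Finset.mem_univ _⟩
      intro h
      have : d * a⁻¹ = 0 := by linear_combination -h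
      rcases mul_eq_zero.mp this with h' | h'
      · exact hd h'
      · exact ha0 (inv_eq_zero.mp h')
    · intro z hz
      have hz1 : z ≠ 1 := (Finset.mem_erase.mp hz).1
      refine Finset.mem_erase.mpr ⟨?_, Finset.mem_univ _⟩
      have h1z : (1 : F) - z ≠ 0 := sub_ne_zero.mpr (Ne.symm hz1)
      exact mul_ne_zero hd (inv_ne_zero h1z)
    · intro a ha
      have ha0 : a ≠ 0 := (Finset.mem_erase.mp ha).1
      field_simp
      rw [sub_sub_cancel, div_self hd]
    · intro z hz
      have hz1 : z ≠ 1 := (Finset.mem_erase.mp hz).1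
      have h1z : (1 : F) - z ≠ 0 := sub_ne_zero.mpr (Ne.symm hz1)
      field_simp
      ring
    · intro a ha; rfl
  rw [step3]
  have step4 : quadraticChar F (1 : F) + ∑ z ∈ Finset.univ.erase (1 : F), quadraticChar F z = 0 := by
    rw [Finset.add_sum_erase Finset.univ _ (Finset.mem_univ (1 : F))]
    exact quadraticChar_sum_zero hchar2
  rw [map_one] at step4
  omega

end Chi

section Core
variable {F : Type*} [Field F] [Fintype F] [DecidableEq F] {k : ℕ} {α : Fˣ}
variable (hcard : Fintype.card F = 4 * k + 1) (hα : orderOf α = 4 * k) (hk : 1 ≤ k)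
  (hodd : k % 2 = 1)

include hcard in
lemma Mcard (d : F) (hd : d ≠ 0) :
    (Finset.univ.filter
      (fun a : F => quadraticChar F a * quadraticChar F (a - d) = -1)).card = 2 * k := by
  set t : F → ℤ := fun a => quadraticChar F a * quadraticChar F (a - d) with ht
  have htri : ∀ a : F, t a = 0 ∨ t a = 1 ∨ t a = -1 := by
    intro a
    by_cases h0 : a = 0
    · left; simp [ht, h0, quadraticChar_zero]
    by_cases hd0 : a - d = 0
    · left; simp [ht, hd0, quadraticChar_zero]
    rcases quadraticChar_dichotomy h0 with h1 | h1 <;>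
      rcases quadraticChar_dichotomy hd0 with h2 | h2 <;>
      simp only [ht] <;> rw [h1, h2] <;> norm_num
  have hzero : ∀ a : F, t a = 0 ↔ a = 0 ∨ a = d := by
    intro a
    constructor
    · intro h
      by_contra hcon
      push_neg at hcon
      rcases mul_eq_zero.mp h with h' | h'
      · exact hcon.1 (quadraticChar_eq_zero_iff.mp h')
      · exact hcon.2 (by have := quadraticChar_eq_zero_iff.mp h'; rwa [sub_eq_zero] at this)
    · rintro (rfl | rfl)
      · simp only [ht]; rw [quadraticChar_zero]; ring
      · simp only [ht]; rw [sub_self, quadraticChar_zero]; ring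
  set P := Finset.univ.filter (fun a : F => t a = 1) with hP
  set M := Finset.univ.filter (fun a : F => t a = -1) with hM
  have hPM : P.card + M.card = 4 * k - 1 := by
    have hun : P ∪ M = Finset.univ.filter (fun a : F => t a = 1 ∨ t a = -1) :=
      (Finset.filter_or _ _ _).symm
    have hun2 : Finset.univ.filter (fun a : F => t a = 1 ∨ t a = -1)
        = Finset.univ \ {0, d} := by
      ext a
      simp only [Finset.mem_filter, Finset.mem_univ, true_and, Finset.mem_sdiff,
        Finset.mem_insert, Finset.mem_singleton]
      constructor
      · rintro (h | h) <;> (intro hc; rw [← hzero] at hc; omega)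
      · intro h
        rcases htri a with h' | h' | h'
        · exact absurd ((hzero a).mp h') h
        · exact Or.inl h'
        · exact Or.inr h'
    have hdisj : Disjoint P M := by
      rw [hP, hM, Finset.disjoint_filter]
      intro x _ h1 h2; omega
    have hcard2 : ({0, d} : Finset F).card = 2 := by
      rw [Finset.card_insert_of_notMem (by simpa using (Ne.symm hd)), Finset.card_singleton]
    rw [← Finset.card_union_of_disjoint hdisj, hun, hun2, Finset.card_sdiff_of_subset (Finset.subset_univ _),
      hcard2, Finset.card_univ, hcard]
    omega
  have hsum : (P.card : ℤ) - M.card = -1 := by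
    have hs := key_sum hcard d hd
    have hsplit : ∑ a : F, t a
        = ∑ a : F, ((if t a = 1 then (1 : ℤ) else 0) + (if t a = -1 then (-1 : ℤ) else 0)) := by
      refine Finset.sum_congr rfl fun a _ => ?_
      rcases htri a with h | h | h <;> rw [h] <;> norm_num
    rw [← ht] at hs
    rw [hs] at hsplit
    rw [Finset.sum_add_distrib] at hsplit
    have h1 : ∑ a : F, (if t a = 1 then (1 : ℤ) else 0) = P.card := Finset.sum_boole _ _
    have h2 : ∑ a : F, (if t a = -1 then (-1 : ℤ) else 0) = -(M.card : ℤ) := by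
      have : ∀ a : F, (if t a = -1 then (-1 : ℤ) else 0) = -(if t a = -1 then (1 : ℤ) else 0) := by
        intro a; split_ifs <;> ring
      rw [Finset.sum_congr rfl (fun a _ => this a), Finset.sum_neg_distrib, Finset.sum_boole]
    rw [h1, h2] at hsplit
    omega
  have : M = Finset.univ.filter
      (fun a : F => quadraticChar F a * quadraticChar F (a - d) = -1) := rfl
  omega

omit hcard hα hk in
lemma card_filter_neg (X Y X' Y' : Finset F) (hX : ∀ x ∈ X, -x ∈ X') (hY : ∀ y ∈ Y, -y ∈ Y')
    (hX' : ∀ x ∈ X', -x ∈ X) (hY' : ∀ y ∈ Y', -y ∈ Y) (d : F) :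
    (X.filter (fun a => a - d ∈ Y)).card = (Y'.filter (fun a => a - d ∈ X')).card := by
  refine Finset.card_nbij' (fun a => d - a) (fun b => d - b) ?_ ?_ ?_ ?_
  · intro a ha
    rw [Finset.mem_coe, Finset.mem_filter] at ha ⊢
    refine ⟨?_, ?_⟩
    · have := hY _ ha.2
      rwa [neg_sub] at this
    · have := hX _ ha.1
      rwa [show d - a - d = -a by ring]
  · intro b hb
    rw [Finset.mem_coe, Finset.mem_filter] at hb ⊢
    refine ⟨?_, ?_⟩
    · have := hX' _ hb.2
      rwa [neg_sub] at this
    · have := hY' _ hb.1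
      rwa [show d - b - d = -b by ring]
  · intro a _; ring
  · intro b _; ring

include hα hk in
lemma cyc4_disjoint {i i' : ℕ} (hi : i < 4) (hi' : i' < 4) (hne : i ≠ i') :
    Disjoint (cyc4 α k i) (cyc4 α k i') := by
  rw [Finset.disjoint_left]
  intro x hx hx'
  simp only [cyc4, Finset.mem_image, Finset.mem_range] at hx
  obtain ⟨j, hj, rfl⟩ := hx
  rw [mem_cyc4_pow hα hk hi'] at hx'
  have : (i + 4 * j) % 4 = i := by omega
  omega

include hcard hα hk hodd in
lemma T_eq (d : F) (hd : d ≠ 0) :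
    (((cyc4 α k 0).filter (fun a => a - d ∈ cyc4 α k 1 ∪ cyc4 α k 3)).card
      + ((cyc4 α k 1 ∪ cyc4 α k 3).filter (fun a => a - d ∈ cyc4 α k 0)).card = k)
    ∧ (((cyc4 α k 2).filter (fun a => a - d ∈ cyc4 α k 1 ∪ cyc4 α k 3)).card
      + ((cyc4 α k 1 ∪ cyc4 α k 3).filter (fun a => a - d ∈ cyc4 α k 2)).card = k) := by
  set Ns := cyc4 α k 1 ∪ cyc4 α k 3 with hNs
  have negN : ∀ y ∈ Ns, -y ∈ Ns := by
    intro y hy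
    rw [hNs, Finset.mem_union] at hy ⊢
    rcases hy with hy | hy
    · exact Or.inr (by simpa using neg_mem_cyc4 hcard hα hk hodd (by norm_num) hy)
    · exact Or.inl (by simpa using neg_mem_cyc4 hcard hα hk hodd (by norm_num) hy)
  have neg0 : ∀ x ∈ cyc4 α k 0, -x ∈ cyc4 α k 2 := fun x hx => by
    simpa using neg_mem_cyc4 hcard hα hk hodd (by norm_num) hx
  have neg2 : ∀ x ∈ cyc4 α k 2, -x ∈ cyc4 α k 0 := fun x hx => by
    simpa using neg_mem_cyc4 hcard hα hk hodd (by norm_num) hx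
  set a0 := ((cyc4 α k 0).filter (fun a => a - d ∈ Ns)).card with ha0
  set b0 := (Ns.filter (fun a => a - d ∈ cyc4 α k 0)).card with hb0
  set a2 := ((cyc4 α k 2).filter (fun a => a - d ∈ Ns)).card with ha2
  set b2 := (Ns.filter (fun a => a - d ∈ cyc4 α k 2)).card with hb2
  have h1 : a0 = b2 := card_filter_neg (cyc4 α k 0) Ns (cyc4 α k 2) Ns neg0 negN neg2 negN d
  have h2 : b0 = a2 := card_filter_neg Ns (cyc4 α k 0) Ns (cyc4 α k 2) negN neg0 negN neg2 d
  have htot : a0 + a2 + (b0 + b2) = 2 * k := by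
    have hQ : a0 + a2 = ((cyc4 α k 0 ∪ cyc4 α k 2).filter (fun a => a - d ∈ Ns)).card :=
      (card_filter_union_src _ _ _ (cyc4_disjoint hα hk (by norm_num) (by norm_num) (by norm_num))).symm
    have hN : b0 + b2 = (Ns.filter (fun a => a - d ∈ cyc4 α k 0 ∪ cyc4 α k 2)).card :=
      (card_filter_mem_union Ns (cyc4 α k 0) (cyc4 α k 2)
        (cyc4_disjoint hα hk (by norm_num) (by norm_num) (by norm_num)) _).symm
    have hQeq : (cyc4 α k 0 ∪ cyc4 α k 2).filter (fun a => a - d ∈ Ns)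
        = Finset.univ.filter (fun a : F => quadraticChar F a = 1 ∧ quadraticChar F (a - d) = -1) := by
      ext x
      simp only [Finset.mem_filter, Finset.mem_univ, true_and]
      rw [mem_Q_iff hcard hα hk, hNs, mem_N_iff hcard hα hk]
    have hNeq : Ns.filter (fun a => a - d ∈ cyc4 α k 0 ∪ cyc4 α k 2)
        = Finset.univ.filter (fun a : F => quadraticChar F a = -1 ∧ quadraticChar F (a - d) = 1) := by
      ext x
      simp only [Finset.mem_filter, Finset.mem_univ, true_and]
      rw [mem_Q_iff hcard hα hk, hNs, mem_N_iff hcard hα hk]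
    have hsplit : (Finset.univ.filter
        (fun a : F => quadraticChar F a * quadraticChar F (a - d) = -1)).card
        = (Finset.univ.filter (fun a : F => quadraticChar F a = 1 ∧ quadraticChar F (a - d) = -1)).card
        + (Finset.univ.filter (fun a : F => quadraticChar F a = -1 ∧ quadraticChar F (a - d) = 1)).card := by
      rw [← Finset.card_union_of_disjoint, ← Finset.filter_or]
      · congr 1
        ext a
        simp only [Finset.mem_filter, Finset.mem_univ, true_and]
        constructor
        · intro h
          have ha0 : a ≠ 0 := by
            rintro rfl; rw [quadraticChar_zero, zero_mul] at h; norm_num at h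
          have had : a - d ≠ 0 := by
            intro h'; rw [h', quadraticChar_zero, mul_zero] at h; norm_num at h
          rcases quadraticChar_dichotomy ha0 with h1 | h1 <;>
            rcases quadraticChar_dichotomy had with h2 | h2 <;>
            rw [h1, h2] at h <;> norm_num at h <;> tauto
        · rintro (⟨h1, h2⟩ | ⟨h1, h2⟩) <;> rw [h1, h2] <;> ring
      · rw [Finset.disjoint_filter]
        rintro x _ ⟨hx1, _⟩ ⟨hx2, _⟩
        omega
    rw [hQ, hN, hQeq, hNeq, ← Mcard hcard d hd, hsplit]
  constructor
  · omega
  · omega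

end Core

section Helpers
variable {F : Type*} [Field F] [DecidableEq F]

lemma c_src_singleton (B : Finset F) (d : F) :
    ((({(0 : F)}) : Finset F).filter (fun a => a - d ∈ B)).card = if -d ∈ B then 1 else 0 := by
  rw [Finset.filter_singleton, zero_sub]
  split_ifs <;> simp

lemma c_tgt_singleton (A : Finset F) (d : F) :
    (A.filter (fun a => a - d ∈ ({(0 : F)} : Finset F))).card = if d ∈ A then 1 else 0 := by
  have h : A.filter (fun a => a - d ∈ ({(0 : F)} : Finset F)) = A.filter (fun a => a = d) :=
    Finset.filter_congr (fun x _ => by simp [sub_eq_zero])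
  rw [h, Finset.filter_eq']
  split_ifs <;> simp

end Helpers

section Helpers2
variable {G : Type*} [AddCommGroup G] [DecidableEq G]

lemma card_filter_mem_union' (X T T' : Finset G) (h : Disjoint T T') (δ : G) :
    (X.filter (fun x => x - δ ∈ T ∪ T')).card
      = (X.filter (fun x => x - δ ∈ T)).card + (X.filter (fun x => x - δ ∈ T')).card :=
  card_filter_mem_union X T T' h _

end Helpers2

/-- Construction A gives an optimal `(2q, 3, (2,2k,2k), 4k+2, 2k+1)`-BSWEDF. -/
theorem stmt11 {F : Type*} [Field F] [Fintype F] [DecidableEq F]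
    (k : ℕ) (hk : Odd k) (hcard : Fintype.card F = 4 * k + 1)
    (α : Fˣ) (hα : orderOf α = 4 * k)
    (S : Fin 3 → Finset (ZMod 2 × F))
    (hS1 : S 0 = {((0 : ZMod 2), (0 : F)), ((1 : ZMod 2), (0 : F))})
    (hS2 : S 1 = (cyc4 α k 0).image (fun x => ((0 : ZMod 2), x)) ∪
                  (cyc4 α k 2).image (fun x => ((1 : ZMod 2), x)))
    (hS3 : S 2 = (cyc4 α k 1).image (fun x => ((0 : ZMod 2), x)) ∪
                  (cyc4 α k 3).image (fun x => ((0 : ZMod 2), x))) :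
    (∀ δ : ZMod 2 × F, δ ≠ 0 →
      Multiset.count δ (wtotal S (2 * k)) ≤ 2 * k + 1) ∧
    (∃ δ : ZMod 2 × F, δ ≠ 0 ∧
      Multiset.count δ (wtotal S (2 * k)) = 2 * k + 1) ∧
    2 * k + 1 = ⌈((2 * k) * (4 * k + 2) * 2 : ℚ) / (2 * (4 * k + 1) - 1)⌉₊ := by
  have hk1 : 1 ≤ k := hk.pos
  have hodd : k % 2 = 1 := Nat.odd_iff.mp hk
  -- rewrite the blocks in `pr` form
  have hS1' : S 0 = pr 0 ({(0:F)} : Finset F) ∪ pr 1 ({(0:F)} : Finset F) := by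
    rw [hS1]
    unfold pr
    rw [Finset.image_singleton, Finset.image_singleton]
    ext y
    simp [or_comm]
  have hS2' : S 1 = pr 0 (cyc4 α k 0) ∪ pr 1 (cyc4 α k 2) := hS2
  have hS3' : S 2 = pr 0 (cyc4 α k 1 ∪ cyc4 α k 3) := by
    rw [hS3]
    unfold pr
    rw [Finset.image_union]
  -- cardinalities
  have hne00 : ((0 : ZMod 2), (0 : F)) ≠ ((1 : ZMod 2), (0 : F)) := by
    intro h
    have h2 := congrArg Prod.fst h
    simp at h2
  have hc0 : (S 0).card = 2 := by
    rw [hS1, Finset.card_insert_of_notMem (by simpa using hne00), Finset.card_singleton]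
  have hc1 : (S 1).card = 2 * k := by
    rw [hS2', Finset.card_union_of_disjoint (pr_disjoint (by decide) _ _), card_pr, card_pr,
      card_cyc4 hα hk1 (by norm_num), card_cyc4 hα hk1 (by norm_num)]
    omega
  have hc2 : (S 2).card = 2 * k := by
    rw [hS3', card_pr,
      Finset.card_union_of_disjoint (cyc4_disjoint hα hk1 (by norm_num) (by norm_num) (by norm_num)),
      card_cyc4 hα hk1 (by norm_num), card_cyc4 hα hk1 (by norm_num)]
    omega
  -- the count formula
  have hcount : ∀ δ : ZMod 2 × F,
      Multiset.count δ (wtotal S (2 * k)) =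
        ((S 0).filter (fun x => x - δ ∈ S 1)).card
        + ((S 0).filter (fun x => x - δ ∈ S 2)).card
        + k * ((S 1).filter (fun x => x - δ ∈ S 0)).card
        + ((S 1).filter (fun x => x - δ ∈ S 2)).card
        + k * ((S 2).filter (fun x => x - δ ∈ S 0)).card
        + ((S 2).filter (fun x => x - δ ∈ S 1)).card := by
    intro δ
    unfold wtotal
    simp only [Fin.sum_univ_three, ne_eq, not_true_eq_false, not_false_eq_true, if_true, if_false,
      reduceIte, Multiset.count_add, Multiset.count_zero, add_zero, zero_add]
    rw [if_pos (show ¬(0:Fin 3)=1 from by decide), if_pos (show ¬(0:Fin 3)=2 from by decide),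
      if_pos (show ¬(1:Fin 3)=0 from by decide), if_pos (show ¬(1:Fin 3)=2 from by decide),
      if_pos (show ¬(2:Fin 3)=0 from by decide), if_pos (show ¬(2:Fin 3)=1 from by decide)]
    rw [count_extDiff_nsmul, count_extDiff_nsmul, count_extDiff_nsmul, count_extDiff_nsmul,
      count_extDiff_nsmul, count_extDiff_nsmul, hc0, hc1, hc2]
    rw [show 2 * k / 2 = k by omega, Nat.div_self (by omega : 0 < 2 * k)]
    ring
  have hcases : ∀ ε : ZMod 2, ε = 0 ∨ ε = 1 := by decide
  have hdisj01 := cyc4_disjoint (F := F) (α := α) hα hk1 (show 0 < 4 by norm_num) (show 1 < 4 by norm_num) (by norm_num)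
  have hdisj02 := cyc4_disjoint (F := F) (α := α) hα hk1 (show 0 < 4 by norm_num) (show 2 < 4 by norm_num) (by norm_num)
  have hdisj03 := cyc4_disjoint (F := F) (α := α) hα hk1 (show 0 < 4 by norm_num) (show 3 < 4 by norm_num) (by norm_num)
  have hdisj21 := cyc4_disjoint (F := F) (α := α) hα hk1 (show 2 < 4 by norm_num) (show 1 < 4 by norm_num) (by norm_num)
  have hdisj23 := cyc4_disjoint (F := F) (α := α) hα hk1 (show 2 < 4 by norm_num) (show 3 < 4 by norm_num) (by norm_num)
  -- the six filter-count evaluations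
  have e01 : ∀ (ε : ZMod 2) (d : F), ((S 0).filter (fun x => x - (ε, d) ∈ S 1)).card
      = (if -d ∈ cyc4 α k 0 then 1 else 0) + (if -d ∈ cyc4 α k 2 then 1 else 0) := by
    intro ε d
    rw [hS1', hS2',
      card_filter_union_src _ _ _ (pr_disjoint (by decide) _ _),
      card_filter_mem_union' _ _ _ (pr_disjoint (by decide) _ _) _,
      card_filter_mem_union' _ _ _ (pr_disjoint (by decide) _ _) _,
      filter_pr_card, filter_pr_card, filter_pr_card, filter_pr_card,
      c_src_singleton, c_src_singleton]
    rcases hcases ε with rfl | rfl <;>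
      simp (config := { decide := true }) only [reduceIte, add_zero, zero_add] <;>
      try ring
  have e02 : ∀ (ε : ZMod 2) (d : F), ((S 0).filter (fun x => x - (ε, d) ∈ S 2)).card
      = (if -d ∈ cyc4 α k 1 ∪ cyc4 α k 3 then 1 else 0) := by
    intro ε d
    rw [hS1', hS3',
      card_filter_union_src _ _ _ (pr_disjoint (by decide) _ _),
      filter_pr_card, filter_pr_card, c_src_singleton]
    rcases hcases ε with rfl | rfl <;>
      simp (config := { decide := true }) only [reduceIte, add_zero, zero_add] <;>
      try ring
  have e10 : ∀ (ε : ZMod 2) (d : F), ((S 1).filter (fun x => x - (ε, d) ∈ S 0)).card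
      = (if d ∈ cyc4 α k 0 then 1 else 0) + (if d ∈ cyc4 α k 2 then 1 else 0) := by
    intro ε d
    rw [hS2', hS1',
      card_filter_union_src _ _ _ (pr_disjoint (by decide) _ _),
      card_filter_mem_union' _ _ _ (pr_disjoint (by decide) _ _) _,
      card_filter_mem_union' _ _ _ (pr_disjoint (by decide) _ _) _,
      filter_pr_card, filter_pr_card, filter_pr_card, filter_pr_card,
      c_tgt_singleton, c_tgt_singleton]
    rcases hcases ε with rfl | rfl <;>
      simp (config := { decide := true }) only [reduceIte, add_zero, zero_add] <;>
      try ring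
  have e20 : ∀ (ε : ZMod 2) (d : F), ((S 2).filter (fun x => x - (ε, d) ∈ S 0)).card
      = (if d ∈ cyc4 α k 1 ∪ cyc4 α k 3 then 1 else 0) := by
    intro ε d
    rw [hS3', hS1',
      card_filter_mem_union' _ _ _ (pr_disjoint (by decide) _ _) _,
      filter_pr_card, filter_pr_card, c_tgt_singleton]
    rcases hcases ε with rfl | rfl <;>
      simp (config := { decide := true }) only [reduceIte, add_zero, zero_add] <;>
      try ring
  have e12 : ∀ (ε : ZMod 2) (d : F), ((S 1).filter (fun x => x - (ε, d) ∈ S 2)).card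
      = (if ε = 0 then ((cyc4 α k 0).filter (fun a => a - d ∈ cyc4 α k 1 ∪ cyc4 α k 3)).card
          else ((cyc4 α k 2).filter (fun a => a - d ∈ cyc4 α k 1 ∪ cyc4 α k 3)).card) := by
    intro ε d
    rw [hS2', hS3',
      card_filter_union_src _ _ _ (pr_disjoint (by decide) _ _),
      filter_pr_card, filter_pr_card]
    rcases hcases ε with rfl | rfl <;>
      simp (config := { decide := true }) only [reduceIte, add_zero, zero_add]
  have e21 : ∀ (ε : ZMod 2) (d : F), ((S 2).filter (fun x => x - (ε, d) ∈ S 1)).card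
      = (if ε = 0 then ((cyc4 α k 1 ∪ cyc4 α k 3).filter (fun a => a - d ∈ cyc4 α k 0)).card
          else ((cyc4 α k 1 ∪ cyc4 α k 3).filter (fun a => a - d ∈ cyc4 α k 2)).card) := by
    intro ε d
    rw [hS3', hS2',
      card_filter_mem_union' _ _ _ (pr_disjoint (by decide) _ _) _,
      filter_pr_card, filter_pr_card]
    rcases hcases ε with rfl | rfl <;>
      simp (config := { decide := true }) only [reduceIte, add_zero, zero_add]
  -- indicator helpers
  have hsum1 : ∀ x : F, x ∈ cyc4 α k 0 ∪ cyc4 α k 2 →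
      (if x ∈ cyc4 α k 0 then 1 else 0) + (if x ∈ cyc4 α k 2 then 1 else 0) = 1 := by
    intro x hx
    rcases Finset.mem_union.mp hx with h | h
    · rw [if_pos h, if_neg (fun h' => Finset.disjoint_left.mp hdisj02 h h')]
    · rw [if_neg (fun h' => Finset.disjoint_left.mp hdisj02 h' h), if_pos h]
  have hm1 : quadraticChar F (-1 : F) = 1 := by
    rw [← alpha_pow_2k hcard hα hk1, chi_pow hcard hα hk1]
    exact Even.neg_one_pow ⟨k, by ring⟩
  have hχneg : ∀ x : F, quadraticChar F (-x) = quadraticChar F x := by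
    intro x
    rw [← neg_one_mul, map_mul, hm1, one_mul]
  -- the master count formula
  have key : ∀ (ε : ZMod 2) (d : F),
      Multiset.count (ε, d) (wtotal S (2 * k)) = if d = 0 then 0 else 2 * k + 1 := by
    intro ε d
    rw [hcount, e01, e02, e10, e20, e12, e21]
    by_cases hd : d = 0
    · subst hd
      rw [if_pos rfl, neg_zero]
      have h0Q : ∀ i : ℕ, (0 : F) ∉ cyc4 α k i := fun i h => cyc4_ne_zero h rfl
      have h0N : (0 : F) ∉ cyc4 α k 1 ∪ cyc4 α k 3 := by
        rw [Finset.mem_union]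
        rintro (h | h) <;> exact cyc4_ne_zero h rfl
      have t1 : ((cyc4 α k 0).filter (fun a => a - (0:F) ∈ cyc4 α k 1 ∪ cyc4 α k 3)).card = 0 := by
        rw [Finset.card_eq_zero, Finset.filter_eq_empty_iff]
        intro x hx hmem
        rw [sub_zero, Finset.mem_union] at hmem
        rcases hmem with h | h
        · exact Finset.disjoint_left.mp hdisj01 hx h
        · exact Finset.disjoint_left.mp hdisj03 hx h
      have t2 : ((cyc4 α k 2).filter (fun a => a - (0:F) ∈ cyc4 α k 1 ∪ cyc4 α k 3)).card = 0 := by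
        rw [Finset.card_eq_zero, Finset.filter_eq_empty_iff]
        intro x hx hmem
        rw [sub_zero, Finset.mem_union] at hmem
        rcases hmem with h | h
        · exact Finset.disjoint_left.mp hdisj21 hx h
        · exact Finset.disjoint_left.mp hdisj23 hx h
      have t3 : ((cyc4 α k 1 ∪ cyc4 α k 3).filter (fun a => a - (0:F) ∈ cyc4 α k 0)).card = 0 := by
        rw [Finset.card_eq_zero, Finset.filter_eq_empty_iff]
        intro x hx hmem
        rw [sub_zero] at hmem
        rcases Finset.mem_union.mp hx with h | h
        · exact Finset.disjoint_left.mp hdisj01 hmem h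
        · exact Finset.disjoint_left.mp hdisj03 hmem h
      have t4 : ((cyc4 α k 1 ∪ cyc4 α k 3).filter (fun a => a - (0:F) ∈ cyc4 α k 2)).card = 0 := by
        rw [Finset.card_eq_zero, Finset.filter_eq_empty_iff]
        intro x hx hmem
        rw [sub_zero] at hmem
        rcases Finset.mem_union.mp hx with h | h
        · exact Finset.disjoint_left.mp hdisj21 hmem h
        · exact Finset.disjoint_left.mp hdisj23 hmem h
      rw [if_neg (h0Q 0), if_neg (h0Q 2), if_neg h0N, t1, t2, t3, t4]
      simp only [ite_self]
      omega
    · rw [if_neg hd]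
      have hT := T_eq hcard hα hk1 hodd d hd
      rcases quadraticChar_dichotomy hd with hχ | hχ
      · -- d is a nonzero square
        have hdQ : d ∈ cyc4 α k 0 ∪ cyc4 α k 2 := (mem_Q_iff hcard hα hk1).mpr hχ
        have hndQ : -d ∈ cyc4 α k 0 ∪ cyc4 α k 2 :=
          (mem_Q_iff hcard hα hk1).mpr (by rw [hχneg]; exact hχ)
        have hdN : d ∉ cyc4 α k 1 ∪ cyc4 α k 3 := fun h => by
          have h2 := (mem_N_iff hcard hα hk1).mp h
          rw [hχ] at h2
          norm_num at h2
        have hndN : -d ∉ cyc4 α k 1 ∪ cyc4 α k 3 := fun h => by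
          have h2 := (mem_N_iff hcard hα hk1).mp h
          rw [hχneg, hχ] at h2
          norm_num at h2
        rw [hsum1 (-d) hndQ, hsum1 d hdQ, if_neg hdN, if_neg hndN]
        rcases hcases ε with rfl | rfl <;>
          simp (config := { decide := true }) only [reduceIte] <;>
          omega
      · -- d is a nonsquare
        have hdN : d ∈ cyc4 α k 1 ∪ cyc4 α k 3 := (mem_N_iff hcard hα hk1).mpr hχ
        have hndN : -d ∈ cyc4 α k 1 ∪ cyc4 α k 3 :=
          (mem_N_iff hcard hα hk1).mpr (by rw [hχneg]; exact hχ)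
        have hdQ : d ∉ cyc4 α k 0 ∪ cyc4 α k 2 := fun h => by
          have h2 := (mem_Q_iff hcard hα hk1).mp h
          rw [hχ] at h2
          norm_num at h2
        have hndQ : -d ∉ cyc4 α k 0 ∪ cyc4 α k 2 := fun h => by
          have h2 := (mem_Q_iff hcard hα hk1).mp h
          rw [hχneg, hχ] at h2
          norm_num at h2
        have hd0 : d ∉ cyc4 α k 0 := fun h => hdQ (Finset.mem_union_left _ h)
        have hd2 : d ∉ cyc4 α k 2 := fun h => hdQ (Finset.mem_union_right _ h)
        have hnd0 : -d ∉ cyc4 α k 0 := fun h => hndQ (Finset.mem_union_left _ h)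
        have hnd2 : -d ∉ cyc4 α k 2 := fun h => hndQ (Finset.mem_union_right _ h)
        rw [if_neg hd0, if_neg hd2, if_neg hnd0, if_neg hnd2, if_pos hdN, if_pos hndN]
        rcases hcases ε with rfl | rfl <;>
          simp (config := { decide := true }) only [reduceIte] <;>
          omega
  refine ⟨?_, ?_, ?_⟩
  · rintro ⟨ε, d⟩ _
    rw [key]
    split_ifs <;> omega
  · refine ⟨((0 : ZMod 2), (α : F)), ?_, ?_⟩
    · intro h
      have h2 := congrArg Prod.snd h
      exact Units.ne_zero α h2
    · rw [key, if_neg (Units.ne_zero α)]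
  · have hk' : (1 : ℚ) ≤ (k : ℚ) := by exact_mod_cast hk1
    rw [eq_comm, Nat.ceil_eq_iff (by omega)]
    have hden : (0 : ℚ) < 2 * (4 * (k : ℚ) + 1) - 1 := by nlinarith
    constructor
    · rw [lt_div_iff₀ hden]
      push_cast
      nlinarith
    · rw [div_le_iff₀ hden]
      push_cast
      nlinarith
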